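/- For all integers λ and l with λ > l ≥ 1, if Z_λ is a Poisson random variable with mean λ, then P(Z_λ ≤ λ − l) ≥ P(Z_l = 0) = e^{−l}. -/
import Mathlib

open Finset

/-- The probability that a Poisson random variable with mean `r` takes the value `k`. -/
noncomputable def poissonPMF (r : ℝ) (k : ℕ) : ℝ :=
  r ^ k * Real.exp (-r) / (Nat.factorial k : ℝ)

/-- `P(Z ≤ t)` for `Z` Poisson with mean `r`, where `t` is a real threshold. -/
noncomputable def poissonLowerTail (r : ℝ) (t : ℝ) : ℝ :=
  ∑' k : ℕ, if (k : ℝ) ≤ t then poissonPMF r k else 0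

namespace Stmt4Aux

/-- partial sum of the series for `e`. -/
noncomputable def E (s : ℕ) : ℝ := ∑ j ∈ Finset.range (s + 1), 1 / (Nat.factorial j : ℝ)

/-- tail of the series for `e`, starting at index `s`. -/
noncomputable def T (s : ℕ) : ℝ := ∑' j : ℕ, 1 / (Nat.factorial (j + s) : ℝ)

lemma summable_one_div_factorial : Summable (fun n : ℕ => 1 / (Nat.factorial n : ℝ)) := by
  simpa using Real.summable_pow_div_factorial 1

lemma summable_tail (s : ℕ) :
    Summable (fun j : ℕ => 1 / (Nat.factorial (j + s) : ℝ)) :=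
  (summable_nat_add_iff s).2 summable_one_div_factorial

lemma exp_one_eq : Real.exp 1 = ∑' n : ℕ, 1 / (Nat.factorial n : ℝ) := by
  rw [Real.exp_eq_exp_ℝ, NormedSpace.exp_eq_tsum_div]
  simp

lemma exp_one_split (m : ℕ) : Real.exp 1 = E m + T (m + 1) := by
  rw [exp_one_eq, E, T, ← Summable.sum_add_tsum_nat_add (m + 1) summable_one_div_factorial]

lemma T_nonneg (s : ℕ) : 0 ≤ T s :=
  tsum_nonneg fun j => by positivity

lemma T_rec (s : ℕ) : T s = 1 / (Nat.factorial s : ℝ) + T (s + 1) := by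
  rw [T, T, Summable.tsum_eq_zero_add (summable_tail s)]
  simp [add_comm, add_assoc, add_left_comm]

lemma T_geom (s : ℕ) (hs : 1 ≤ s) :
    T s ≤ 1 / (Nat.factorial s : ℝ) * ((s + 1) / s) := by
  have hs' : (1:ℝ) ≤ (s:ℝ) := by exact_mod_cast hs
  have h1 : ∀ j : ℕ, 1 / (Nat.factorial (j + s) : ℝ)
      ≤ 1 / (Nat.factorial s : ℝ) * (1 / (s + 1)) ^ j := by
    intro j
    have hfac : (Nat.factorial s : ℝ) * ((s + 1 : ℝ)) ^ j ≤ (Nat.factorial (j + s) : ℝ) := by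
      have := Nat.factorial_mul_pow_le_factorial (m := s) (n := j)
      calc (Nat.factorial s : ℝ) * ((s + 1 : ℝ)) ^ j
          = ((Nat.factorial s * (s + 1) ^ j : ℕ) : ℝ) := by push_cast; ring
        _ ≤ ((Nat.factorial (s + j) : ℕ) : ℝ) := by exact_mod_cast Nat.cast_le.mpr this
        _ = _ := by rw [Nat.add_comm]
    calc 1 / (Nat.factorial (j + s) : ℝ)
        ≤ 1 / ((Nat.factorial s : ℝ) * ((s + 1 : ℝ)) ^ j) :=
          one_div_le_one_div_of_le (by positivity) hfac
      _ = 1 / (Nat.factorial s : ℝ) * (1 / (s + 1)) ^ j := by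
          rw [one_div_pow, div_mul_div_comm, one_mul]
  have hrlt : (1 : ℝ) / ((s : ℝ) + 1) < 1 := by
    rw [div_lt_one (by positivity)]; linarith
  have hsum : Summable (fun j : ℕ => 1 / (Nat.factorial s : ℝ) * (1 / ((s : ℝ) + 1)) ^ j) :=
    Summable.mul_left _ (summable_geometric_of_lt_one (by positivity) hrlt)
  calc T s ≤ ∑' j : ℕ, 1 / (Nat.factorial s : ℝ) * (1 / ((s : ℝ) + 1)) ^ j :=
        Summable.tsum_le_tsum h1 (summable_tail s) hsum
    _ = 1 / (Nat.factorial s : ℝ) * (1 - 1 / ((s : ℝ) + 1))⁻¹ := by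
        rw [tsum_mul_left, tsum_geometric_of_lt_one (by positivity) hrlt]
    _ ≤ 1 / (Nat.factorial s : ℝ) * (((s : ℝ) + 1) / s) := by
        have : (1 - 1 / ((s : ℝ) + 1))⁻¹ = ((s : ℝ) + 1) / s := by
          rw [one_sub_div (by positivity)]
          norm_num [inv_div]
        rw [this]

lemma sum_T_identity (K : ℕ) :
    ∑ s ∈ Finset.range K, T (s + 2) = 1 - T (K + 1) + (K + 1) * T (K + 2) := by
  induction K with
  | zero =>
      norm_num [T_rec 1]
  | succ K ih =>
      rw [Finset.sum_range_succ, ih]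
      have h1 := T_rec (K + 1)
      have h2 := T_rec (K + 2)
      have hfac : ((Nat.factorial (K + 2) : ℝ)) = (K + 2) * (Nat.factorial (K + 1) : ℝ) := by
        rw [Nat.factorial_succ (K + 1)]; push_cast; ring
      have hfacpos : (0:ℝ) < (Nat.factorial (K + 1) : ℝ) := by positivity
      push_cast
      -- goal: algebraic identity among T(K+1), T(K+2), T(K+3)
      rw [h1, h2, hfac] at *
      field_simp
      ring

lemma sum_T_le_one (K : ℕ) : ∑ s ∈ Finset.range K, T (s + 2) ≤ 1 := by
  rw [sum_T_identity]
  have hr := T_rec (K + 1)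
  have hfac1 : (0:ℝ) < (Nat.factorial (K + 1) : ℝ) := by positivity
  have hfac2 : (0:ℝ) < (Nat.factorial (K + 2) : ℝ) := by positivity
  have hfe : (Nat.factorial (K + 2) : ℝ) = ((K:ℝ) + 2) * (Nat.factorial (K + 1) : ℝ) := by
    rw [Nat.factorial_succ (K + 1)]; push_cast; ring
  have key : (K : ℝ) * T (K + 2) ≤ 1 / (Nat.factorial (K + 1) : ℝ) := by
    have h2 := T_geom (K + 2) (by omega)
    push_cast at h2
    calc (K : ℝ) * T (K + 2)
        ≤ (K : ℝ) * (1 / (Nat.factorial (K + 2) : ℝ) * (((K:ℝ) + 2 + 1) / ((K:ℝ) + 2))) := by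
          apply mul_le_mul_of_nonneg_left h2 (Nat.cast_nonneg K)
      _ ≤ 1 / (Nat.factorial (K + 1) : ℝ) := by
          rw [mul_comm, mul_assoc, div_mul_eq_mul_div, one_mul, div_mul_eq_mul_div,
            div_div, div_le_div_iff₀ (by positivity) hfac1]
          have hK : (0:ℝ) ≤ (K:ℝ) := Nat.cast_nonneg K
          nlinarith [hfac1, hK]
  have hTn := T_nonneg (K + 2)
  push_cast
  linarith

/-- the partial exponential-like sum. -/
noncomputable def f (n : ℕ) : ℝ :=
  ∑ k ∈ Finset.range (n + 1), ((n + 1 : ℕ) : ℝ) ^ k / (Nat.factorial k : ℝ)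

lemma E_succ (s : ℕ) : E (s + 1) = E s + 1 / (Nat.factorial (s + 1) : ℝ) := by
  rw [E, E, Finset.sum_range_succ]

lemma sum_exp_shift (x : ℝ) (M : ℕ) :
    ∑ k ∈ Finset.range (M + 1), (x + 1) ^ k / (Nat.factorial k : ℝ)
      = ∑ i ∈ Finset.range (M + 1), x ^ i / (Nat.factorial i : ℝ) * E (M - i) := by
  induction M with
  | zero => simp [E]
  | succ M ih =>
    rw [Finset.sum_range_succ, ih,
      Finset.sum_range_succ (f := fun i => x ^ i / (Nat.factorial i : ℝ) * E (M + 1 - i))]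
    have hE : ∀ i ∈ Finset.range (M + 1),
        x ^ i / (Nat.factorial i : ℝ) * E (M + 1 - i)
          = x ^ i / (Nat.factorial i : ℝ) * E (M - i)
            + x ^ i / ((Nat.factorial i : ℝ) * (Nat.factorial (M + 1 - i) : ℝ)) := by
      intro i hi
      have hiM : i ≤ M := by simpa [Nat.lt_succ_iff] using hi
      have h1 : M + 1 - i = (M - i) + 1 := by omega
      rw [h1, E_succ, ← h1, mul_add, div_mul_div_comm, mul_one]
    rw [Finset.sum_congr rfl hE, Finset.sum_add_distrib]
    have hbinom : (x + 1) ^ (M + 1) / (Nat.factorial (M + 1) : ℝ)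
        = ∑ i ∈ Finset.range (M + 2),
            x ^ i / ((Nat.factorial i : ℝ) * (Nat.factorial (M + 1 - i) : ℝ)) := by
      rw [add_pow, Finset.sum_div]
      refine Finset.sum_congr rfl fun i hi => ?_
      have hiM : i ≤ M + 1 := by simpa [Nat.lt_succ_iff] using hi
      rw [Nat.cast_choose ℝ hiM]
      have h0 : (Nat.factorial i : ℝ) ≠ 0 := by positivity
      have h1 : (Nat.factorial (M + 1 - i) : ℝ) ≠ 0 := by positivity
      field_simp
      ring
    rw [hbinom, Finset.sum_range_succ
      (f := fun i => x ^ i / ((Nat.factorial i : ℝ) * (Nat.factorial (M + 1 - i) : ℝ)))]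
    have : E (M + 1 - (M + 1)) = 1 := by simp [E]
    rw [this]
    simp [Nat.sub_self]
    ring

lemma ratio_le (n i : ℕ) (hi : i ≤ n + 1) :
    ((n + 1 : ℕ) : ℝ) ^ i / (Nat.factorial i : ℝ)
      ≤ ((n + 1 : ℕ) : ℝ) ^ (n + 1) / (Nat.factorial (n + 1) : ℝ) := by
  have hfac : (Nat.factorial (n + 1)) ≤ Nat.factorial i * (n + 1) ^ (n + 1 - i) := by
    have hd : Nat.factorial i * Nat.descFactorial (n + 1) (n + 1 - i) = Nat.factorial (n + 1) := by
      have h2 : (n + 1) - (n + 1 - i) = i := by omega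
      have := Nat.factorial_mul_descFactorial (n := n + 1) (k := n + 1 - i) (by omega)
      rw [h2] at this
      exact this
    calc Nat.factorial (n + 1) = Nat.factorial i * Nat.descFactorial (n + 1) (n + 1 - i) :=
          hd.symm
      _ ≤ Nat.factorial i * (n + 1) ^ (n + 1 - i) :=
          Nat.mul_le_mul_left _ (Nat.descFactorial_le_pow _ _)
  have hfacR : (Nat.factorial (n + 1) : ℝ)
      ≤ (Nat.factorial i : ℝ) * ((n + 1 : ℕ) : ℝ) ^ (n + 1 - i) := by
    exact_mod_cast hfac
  have hxpos : (0:ℝ) < ((n + 1 : ℕ) : ℝ) := by positivity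
  rw [div_le_div_iff₀ (by positivity) (by positivity)]
  calc ((n + 1 : ℕ) : ℝ) ^ i * (Nat.factorial (n + 1) : ℝ)
      ≤ ((n + 1 : ℕ) : ℝ) ^ i * ((Nat.factorial i : ℝ) * ((n + 1 : ℕ) : ℝ) ^ (n + 1 - i)) :=
        mul_le_mul_of_nonneg_left hfacR (by positivity)
    _ = ((n + 1 : ℕ) : ℝ) ^ (i + (n + 1 - i)) * (Nat.factorial i : ℝ) := by
        rw [pow_add]; ring
    _ = ((n + 1 : ℕ) : ℝ) ^ (n + 1) * (Nat.factorial i : ℝ) := by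
        congr 2
        omega

lemma key (n : ℕ) : Real.exp 1 * f n ≤ f (n + 1) := by
  set x : ℝ := ((n + 1 : ℕ) : ℝ) with hxdef
  have hx1 : x + 1 = ((n + 2 : ℕ) : ℝ) := by push_cast [hxdef]; ring
  have hshift := sum_exp_shift x (n + 1)
  have hfn1 : f (n + 1) = ∑ i ∈ Finset.range (n + 2), x ^ i / (Nat.factorial i : ℝ) * E (n + 1 - i) := by
    rw [f, ← hshift]
    refine Finset.sum_congr rfl fun k _ => ?_
    rw [hx1]
  have hsplit : f (n + 1)
      = ∑ i ∈ Finset.range (n + 1), x ^ i / (Nat.factorial i : ℝ) * E (n + 1 - i)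
        + x ^ (n + 1) / (Nat.factorial (n + 1) : ℝ) := by
    rw [hfn1, Finset.sum_range_succ]
    simp [E]
  have hexpfn : Real.exp 1 * f n
      = ∑ i ∈ Finset.range (n + 1), x ^ i / (Nat.factorial i : ℝ) * E (n + 1 - i)
        + ∑ i ∈ Finset.range (n + 1), x ^ i / (Nat.factorial i : ℝ) * T (n + 1 - i + 1) := by
    rw [f, Finset.mul_sum, ← Finset.sum_add_distrib]
    refine Finset.sum_congr rfl fun i hi => ?_
    rw [← mul_add, ← exp_one_split (n + 1 - i)]
    ring
  -- bound the tail sum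
  have hTsum : ∑ i ∈ Finset.range (n + 1), x ^ i / (Nat.factorial i : ℝ) * T (n + 1 - i + 1)
      ≤ x ^ (n + 1) / (Nat.factorial (n + 1) : ℝ) := by
    calc ∑ i ∈ Finset.range (n + 1), x ^ i / (Nat.factorial i : ℝ) * T (n + 1 - i + 1)
        ≤ ∑ i ∈ Finset.range (n + 1),
            x ^ (n + 1) / (Nat.factorial (n + 1) : ℝ) * T (n + 1 - i + 1) := by
          refine Finset.sum_le_sum fun i hi => ?_
          have hiM : i ≤ n + 1 := by
            have := Finset.mem_range.mp hi; omega
          exact mul_le_mul_of_nonneg_right (ratio_le n i hiM) (T_nonneg _)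
      _ = x ^ (n + 1) / (Nat.factorial (n + 1) : ℝ)
            * ∑ i ∈ Finset.range (n + 1), T (n + 1 - i + 1) := by
          rw [Finset.mul_sum]
      _ ≤ x ^ (n + 1) / (Nat.factorial (n + 1) : ℝ) * 1 := by
          apply mul_le_mul_of_nonneg_left _ (by positivity)
          have hreflect : ∑ i ∈ Finset.range (n + 1), T (n + 1 - i + 1)
              = ∑ s ∈ Finset.range (n + 1), T (s + 2) := by
            rw [← Finset.sum_range_reflect (fun s => T (s + 2)) (n + 1)]
            refine Finset.sum_congr rfl fun i hi => ?_
            have hiM : i ≤ n := by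
              have := Finset.mem_range.mp hi; omega
            congr 1
            omega
          rw [hreflect]
          exact sum_T_le_one (n + 1)
      _ = x ^ (n + 1) / (Nat.factorial (n + 1) : ℝ) := mul_one _
  linarith [hsplit, hexpfn, hTsum]

lemma f_ge_exp (n : ℕ) : Real.exp n ≤ f n := by
  induction n with
  | zero => simp [f]
  | succ n ih =>
    have h1 : Real.exp ((n + 1 : ℕ) : ℝ) = Real.exp 1 * Real.exp n := by
      push_cast
      rw [← Real.exp_add]
      ring_nf
    rw [h1]
    calc Real.exp 1 * Real.exp n ≤ Real.exp 1 * f n :=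
          mul_le_mul_of_nonneg_left ih (Real.exp_pos 1).le
      _ ≤ f (n + 1) := key n

end Stmt4Aux

/-- For integers `λ > l ≥ 1`, with `Z_λ ~ Poisson(λ)`:
`P(Z_λ ≤ λ - l) ≥ P(Z_l = 0) = e^{-l}`. -/
theorem stmt4 (lam l : ℕ) (hl : 1 ≤ l) (hllam : l < lam) :
    poissonLowerTail (lam : ℝ) ((lam : ℝ) - l) ≥ poissonPMF (l : ℝ) 0 ∧
    poissonPMF (l : ℝ) 0 = Real.exp (-(l : ℝ)) := by
  have hpmf0 : poissonPMF (l : ℝ) 0 = Real.exp (-(l : ℝ)) := by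
    simp [poissonPMF]
  refine ⟨?_, hpmf0⟩
  rw [hpmf0]
  set m : ℕ := lam - l with hm
  have hml : m + l = lam := by omega
  have hcast : (m : ℝ) = (lam : ℝ) - l := by
    rw [hm, Nat.cast_sub hllam.le]
  have hcond : ∀ k : ℕ, ((k : ℝ) ≤ (lam : ℝ) - (l : ℝ)) ↔ k ≤ m := by
    intro k
    rw [← hcast, Nat.cast_le]
  have h1 : poissonLowerTail (lam : ℝ) ((lam : ℝ) - l)
      = ∑ k ∈ Finset.range (m + 1), poissonPMF (lam : ℝ) k := by
    rw [poissonLowerTail]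
    rw [tsum_congr (fun k => if_congr (hcond k) rfl rfl)]
    rw [tsum_eq_sum (s := Finset.range (m + 1))
      (fun b hb => if_neg (by simp only [Finset.mem_range] at hb; omega))]
    exact Finset.sum_congr rfl fun k hk => if_pos (by
      simp only [Finset.mem_range] at hk; omega)
  rw [h1, ge_iff_le]
  have h2 : ∑ k ∈ Finset.range (m + 1), poissonPMF (lam : ℝ) k
      = Real.exp (-(lam:ℝ)) * ∑ k ∈ Finset.range (m + 1), (lam : ℝ) ^ k / (Nat.factorial k : ℝ) := by
    rw [Finset.mul_sum]
    refine Finset.sum_congr rfl fun k _ => ?_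
    rw [poissonPMF]
    ring
  rw [h2]
  have h3 : Stmt4Aux.f m ≤ ∑ k ∈ Finset.range (m + 1), (lam : ℝ) ^ k / (Nat.factorial k : ℝ) := by
    rw [Stmt4Aux.f]
    refine Finset.sum_le_sum fun k _ => ?_
    apply div_le_div_of_nonneg_right _ (by positivity)
    · apply pow_le_pow_left₀ (by positivity)
      exact_mod_cast Nat.cast_le.mpr (by omega : m + 1 ≤ lam)
  calc Real.exp (-(l:ℝ)) = Real.exp (-(lam:ℝ)) * Real.exp (m : ℝ) := by
        rw [← Real.exp_add, hcast]; ring_nf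
    _ ≤ Real.exp (-(lam:ℝ)) * Stmt4Aux.f m :=
        mul_le_mul_of_nonneg_left (Stmt4Aux.f_ge_exp m) (Real.exp_pos _).le
    _ ≤ Real.exp (-(lam:ℝ)) * ∑ k ∈ Finset.range (m + 1), (lam : ℝ) ^ k / (Nat.factorial k : ℝ) :=
        mul_le_mul_of_nonneg_left h3 (Real.exp_pos _).le
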